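/- Let H = ⟨η⟩ ⊆ K* be a finite cyclic group, a₁,…,a_r ∈ ℤ, d_i the order of η^{a_i}, D = diag(d₁,…,d_r), and β : ℤ^r → A the grading map. Let Y = Y_{A,H} = {[t₁^{a₁}:⋯:t_r^{a_r}] : t_i ∈ H} ⊆ T_X be the degenerate torus. Then the vanishing ideal of Y is the lattice ideal I_L for the lattice L = D(L_{βD}), where L_{βD} = Ker(β∘D) = {m ∈ ℤ^r : β(Dm) = 0}. -/

import Mathlib

open MvPolynomial

/-- The exponent vector of the positive part `m⁺` of an integer vector. -/
noncomputable def expOf {r : ℕ} (m : Fin r → ℤ) : Fin r →₀ ℕ :=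
  Finsupp.equivFunOnFinite.symm fun i => (m i).toNat

/-- The binomial `F_m = x^{m⁺} - x^{m⁻}`. -/
noncomputable def latticeBinomial (K : Type*) [Field K] {r : ℕ} (m : Fin r → ℤ) :
    MvPolynomial (Fin r) K :=
  monomial (expOf m) 1 - monomial (expOf (-m)) 1

/-- The lattice ideal `I_L` of a lattice `L ⊆ ℤ^r`. -/
noncomputable def latticeIdeal (K : Type*) [Field K] {r : ℕ} (L : AddSubgroup (Fin r → ℤ)) :
    Ideal (MvPolynomial (Fin r) K) :=
  Ideal.span {f | ∃ m ∈ L, f = latticeBinomial K m}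

/-- Degree of a monomial exponent under the grading `β`. -/
def degOf {A : Type*} [AddCommGroup A] {r : ℕ} (β : (Fin r → ℤ) →+ A) (d : Fin r →₀ ℕ) : A :=
  β fun i => (d i : ℤ)

/-- `f` is homogeneous of degree `α` with respect to `β`. -/
def IsHomogOf {A : Type*} [AddCommGroup A] {K : Type*} [Field K] {r : ℕ}
    (β : (Fin r → ℤ) →+ A) (α : A) (f : MvPolynomial (Fin r) K) : Prop :=
  ∀ d ∈ f.support, degOf β d = α

/-- `f` is homogeneous with respect to `β`. -/
def IsHomog {A : Type*} [AddCommGroup A] {K : Type*} [Field K] {r : ℕ}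
    (β : (Fin r → ℤ) →+ A) (f : MvPolynomial (Fin r) K) : Prop :=
  ∃ α, IsHomogOf β α f

/-- An ideal is homogeneous if it is generated by homogeneous polynomials. -/
def IsHomogIdeal {A : Type*} [AddCommGroup A] {K : Type*} [Field K] {r : ℕ}
    (β : (Fin r → ℤ) →+ A) (I : Ideal (MvPolynomial (Fin r) K)) : Prop :=
  ∃ S : Set (MvPolynomial (Fin r) K), (∀ f ∈ S, IsHomog β f) ∧ I = Ideal.span S

/-- `x^m(P) = ∏ᵢ Pᵢ^{mᵢ}` as a unit. -/
def charEval {K : Type*} [Field K] {r : ℕ} (P : Fin r → Kˣ) (m : Fin r → ℤ) : Kˣ :=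
  ∏ i, (P i) ^ (m i)

/-- The group `G = Ker π`, consisting of the points where all characters coming
from `Ker β` take the value `1`. -/
def torusG {K : Type*} [Field K] {A : Type*} [AddCommGroup A] {r : ℕ}
    (β : (Fin r → ℤ) →+ A) : Subgroup (Fin r → Kˣ) where
  carrier := {g | ∀ m ∈ β.ker, charEval g m = 1}
  one_mem' := by intro m hm; simp [charEval]
  mul_mem' := by
    intro a b ha hb m hm
    have : charEval (a * b) m = charEval a m * charEval b m := by
      simp [charEval, mul_zpow, Finset.prod_mul_distrib]
    rw [this, ha m hm, hb m hm, one_mul]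
  inv_mem' := by
    intro a ha m hm
    have : charEval a⁻¹ m = (charEval a m)⁻¹ := by
      simp [charEval, inv_zpow]
    rw [this, ha m hm, inv_one]

/-- The vanishing ideal of a set of torus points, generated by the homogeneous
polynomials vanishing on it. -/
noncomputable def vanishingIdeal {K : Type*} [Field K] {A : Type*} [AddCommGroup A] {r : ℕ}
    (β : (Fin r → ℤ) →+ A) (Y : Set ((Fin r → Kˣ) ⧸ torusG (K := K) β)) :
    Ideal (MvPolynomial (Fin r) K) :=
  Ideal.span {f | IsHomog β f ∧
    ∀ P : Fin r → Kˣ, (QuotientGroup.mk P ∈ Y) → eval (fun i => (P i : K)) f = 0}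

/-- Height of an ideal: infimum of heights of primes containing it. -/
noncomputable def idealHeight {R : Type*} [CommRing R] (I : Ideal R) : ℕ∞ :=
  ⨅ (p : PrimeSpectrum R) (_ : I ≤ p.asIdeal), Order.height p

/-- A homogeneous ideal is a complete intersection if it is generated by a regular
sequence of homogeneous polynomials whose length is the height of the ideal. -/
def IsCompleteIntersection {K : Type*} [Field K] {A : Type*} [AddCommGroup A] {r : ℕ}
    (β : (Fin r → ℤ) →+ A) (I : Ideal (MvPolynomial (Fin r) K)) : Prop :=
  ∃ (k : ℕ) (f : Fin k → MvPolynomial (Fin r) K),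
    (∀ i, IsHomog β (f i)) ∧
    RingTheory.Sequence.IsRegular (MvPolynomial (Fin r) K) (List.ofFn f) ∧
    I = Ideal.span (Set.range f) ∧ (k : ℕ∞) = idealHeight I

/-- The diagonal map `D = diag(d₁,…,d_r)` acting on `ℤ^r`. -/
def Dhom {r : ℕ} (d : Fin r → ℕ) : (Fin r → ℤ) →+ (Fin r → ℤ) where
  toFun m := fun i => (d i : ℤ) * m i
  map_zero' := by funext i; simp
  map_add' a b := by funext i; simp [mul_add]

section AuxStmt10

variable {K : Type*} [Field K] {A : Type*} [AddCommGroup A] {r : ℕ}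

lemma charEval_mul' (P Q : Fin r → Kˣ) (m : Fin r → ℤ) :
    charEval (P * Q) m = charEval P m * charEval Q m := by
  simp [charEval, mul_zpow, Finset.prod_mul_distrib]

lemma charEval_inv' (P : Fin r → Kˣ) (m : Fin r → ℤ) :
    charEval P⁻¹ m = (charEval P m)⁻¹ := by
  simp [charEval, inv_zpow]

lemma Dhom_apply (d : Fin r → ℕ) (n : Fin r → ℤ) (i : Fin r) :
    Dhom d n i = (d i : ℤ) * n i := rfl

lemma expOf_apply (m : Fin r → ℤ) (i : Fin r) : expOf m i = (m i).toNat := rfl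

lemma charEval_sub_units (P : Fin r → Kˣ) (u v : Fin r →₀ ℕ) :
    (∏ i, P i ^ (u i)) = (∏ i, P i ^ (v i)) * charEval P (fun i => (u i : ℤ) - v i) := by
  rw [charEval, ← Finset.prod_mul_distrib]
  refine Finset.prod_congr rfl fun i _ => ?_
  rw [← zpow_natCast (P i) (u i), ← zpow_natCast (P i) (v i), ← zpow_add]
  congr 1; ring

/-- The subgroup of `(Kˣ)^r` of points lying over the degenerate torus. -/
def degTorus (β : (Fin r → ℤ) →+ A) (η : Kˣ) (a : Fin r → ℤ) : Subgroup (Fin r → Kˣ) where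
  carrier := {P | ∃ t : Fin r → Kˣ, (∀ i, t i ∈ Subgroup.zpowers η) ∧
    (QuotientGroup.mk P : _ ⧸ torusG (K := K) β) = QuotientGroup.mk (fun i => t i ^ a i)}
  one_mem' := ⟨1, fun i => one_mem _, by congr 1; funext i; simp⟩
  mul_mem' := by
    rintro P Q ⟨t, ht, hP⟩ ⟨s, hs, hQ⟩
    refine ⟨t * s, fun i => mul_mem (ht i) (hs i), ?_⟩
    rw [show (fun i => (t * s) i ^ a i) = (fun i => t i ^ a i) * fun i => s i ^ a i from
      funext fun i => by simp [mul_zpow], QuotientGroup.mk_mul, QuotientGroup.mk_mul, hP, hQ]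
  inv_mem' := by
    rintro P ⟨t, ht, hP⟩
    refine ⟨t⁻¹, fun i => inv_mem (ht i), ?_⟩
    rw [show (fun i => (t⁻¹) i ^ a i) = (fun i => t i ^ a i)⁻¹ from
      funext fun i => by simp [inv_zpow], QuotientGroup.mk_inv, QuotientGroup.mk_inv, hP]

lemma charEval_eq_one_of_mem (β : (Fin r → ℤ) →+ A) (η : Kˣ) (a : Fin r → ℤ)
    (d : Fin r → ℕ) (hdpow : ∀ i, (η ^ a i) ^ d i = 1)
    {P : Fin r → Kˣ} (hP : P ∈ degTorus β η a) {m : Fin r → ℤ}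
    (hm : m ∈ AddSubgroup.map (Dhom d) (AddMonoidHom.ker (β.comp (Dhom d)))) :
    charEval P m = 1 := by
  obtain ⟨n, hn, rfl⟩ := hm
  obtain ⟨t, ht, hPt⟩ := hP
  have hker : Dhom d n ∈ β.ker := by
    simpa [AddMonoidHom.mem_ker] using hn
  have h1 : charEval (P⁻¹ * fun i => t i ^ a i) (Dhom d n) = 1 :=
    (QuotientGroup.eq.mp hPt) _ hker
  have h2 : charEval (fun i => t i ^ a i) (Dhom d n) = 1 := by
    rw [charEval]
    refine Finset.prod_eq_one fun i _ => ?_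
    obtain ⟨c, hc⟩ := Subgroup.mem_zpowers_iff.mp (ht i)
    have hη1 : η ^ (a i * (d i : ℤ)) = 1 := by
      rw [zpow_mul, zpow_natCast]; exact hdpow i
    calc (t i ^ a i) ^ (Dhom d n i)
        = η ^ (c * a i * ((d i : ℤ) * n i)) := by
          rw [← hc, ← zpow_mul, ← zpow_mul, Dhom_apply]; congr 1; ring
      _ = (η ^ (a i * (d i : ℤ))) ^ (c * n i) := by rw [← zpow_mul]; congr 1; ring
      _ = 1 := by rw [hη1, one_zpow]
  rw [charEval_mul', charEval_inv', h2, mul_one] at h1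
  exact inv_eq_one.mp h1

lemma monomial_sub_mem (L : AddSubgroup (Fin r → ℤ)) (u v : Fin r →₀ ℕ)
    (h : (fun i => (u i : ℤ) - v i) ∈ L) :
    (monomial u 1 - monomial v 1 : MvPolynomial (Fin r) K) ∈ latticeIdeal K L := by
  set m : Fin r → ℤ := fun i => (u i : ℤ) - v i with hm
  have hb : latticeBinomial K m ∈ latticeIdeal K L := Ideal.subset_span ⟨m, h, rfl⟩
  set w : Fin r →₀ ℕ := Finsupp.equivFunOnFinite.symm (fun i => min (u i) (v i)) with hw
  have key : (monomial u 1 - monomial v 1 : MvPolynomial (Fin r) K)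
      = monomial w 1 * latticeBinomial K m := by
    have h1 : w + expOf m = u := by
      ext i
      have hmi : m i = (u i : ℤ) - v i := rfl
      simp only [Finsupp.add_apply, expOf_apply, hw, Finsupp.coe_equivFunOnFinite_symm,
        hmi]
      omega
    have h2 : w + expOf (-m) = v := by
      ext i
      have hmi : (-m) i = (v i : ℤ) - u i := by simp [hm]
      simp only [Finsupp.add_apply, expOf_apply, hw, Finsupp.coe_equivFunOnFinite_symm,
        hmi]
      omega
    rw [latticeBinomial, mul_sub, monomial_mul, monomial_mul, mul_one, h1, h2]
  rw [key]
  exact Ideal.mul_mem_left _ _ hb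

lemma eval_monomial_units (P : Fin r → Kˣ) (u : Fin r →₀ ℕ) :
    eval (fun i => (P i : K)) (monomial u (1 : K)) = ((∏ i, P i ^ (u i) : Kˣ) : K) := by
  rw [eval_monomial, one_mul]
  rw [show ((∏ i, P i ^ (u i) : Kˣ) : K) = ∏ i, ((P i : K)) ^ (u i) by push_cast; rfl]
  exact Finsupp.prod_fintype _ _ fun i => pow_zero _

lemma expOf_sub_expOf_neg (m : Fin r → ℤ) :
    (fun i => ((expOf m) i : ℤ) - ((expOf (-m)) i : ℤ)) = m := by
  funext i
  simp only [expOf_apply, Pi.neg_apply]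
  omega



lemma isHomog_latticeBinomial (β : (Fin r → ℤ) →+ A) {m : Fin r → ℤ} (hm : β m = 0) :
    IsHomog β (latticeBinomial K m) := by
  classical
  refine ⟨degOf β (expOf m), fun e he => ?_⟩
  have hdeg : degOf β (expOf (-m)) = degOf β (expOf m) := by
    have h1 : degOf β (expOf m) - degOf β (expOf (-m)) = β m := by
      rw [degOf, degOf, ← map_sub]
      exact congrArg β (expOf_sub_expOf_neg m)
    rw [hm] at h1
    have := sub_eq_zero.mp h1
    exact this.symm
  have hsub := MvPolynomial.support_sub (Fin r)
    (monomial (expOf m) (1 : K)) (monomial (expOf (-m)) 1) he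
  rw [Finset.mem_union] at hsub
  rcases hsub with h | h
  · rw [MvPolynomial.support_monomial] at h
    simp only [one_ne_zero, if_false, Finset.mem_singleton] at h
    rw [h]
  · rw [MvPolynomial.support_monomial] at h
    simp only [one_ne_zero, if_false, Finset.mem_singleton] at h
    rw [h, hdeg]

/-- Characters of the degenerate torus subgroup. -/
def chiChar (β : (Fin r → ℤ) →+ A) (η : Kˣ) (a : Fin r → ℤ) (u : Fin r →₀ ℕ) :
    (degTorus β η a) →* K where
  toFun P := ∏ i, ((P : Fin r → Kˣ) i : K) ^ (u i)
  map_one' := by simp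
  map_mul' P Q := by simp [mul_pow, Finset.prod_mul_distrib]

lemma chiChar_apply (β : (Fin r → ℤ) →+ A) (η : Kˣ) (a : Fin r → ℤ) (u : Fin r →₀ ℕ)
    (P : degTorus β η a) :
    chiChar β η a u P = ((∏ i, (P : Fin r → Kˣ) i ^ (u i) : Kˣ) : K) := by
  rw [show ((∏ i, (P : Fin r → Kˣ) i ^ (u i) : Kˣ) : K)
      = ∏ i, (((P : Fin r → Kˣ) i : K)) ^ (u i) by push_cast; rfl]
  rfl

end AuxStmt10
/-- the vanishing ideal of the degenerate torus
`Y = {[t₁^{a₁}:⋯:t_r^{a_r}] : tᵢ ∈ ⟨η⟩}` is the lattice ideal of the lattice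
`L = D(L_{βD})`, where `dᵢ` is the order of `η^{aᵢ}` and `D = diag(d₁,…,d_r)`. -/
theorem stmt_10 {K : Type*} [Field K] {A : Type*} [AddCommGroup A] {r : ℕ}
    (β : (Fin r → ℤ) →+ A) (hβ : Function.Surjective β)
    (η : Kˣ) (hη : IsOfFinOrder η) (a : Fin r → ℤ)
    (d : Fin r → ℕ) (hd : ∀ i, d i = orderOf (η ^ (a i))) :
    vanishingIdeal β {y : (Fin r → Kˣ) ⧸ torusG (K := K) β |
        ∃ t : Fin r → Kˣ, (∀ i, t i ∈ Subgroup.zpowers η) ∧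
          y = QuotientGroup.mk (fun i => (t i) ^ (a i))} =
      latticeIdeal K
        (AddSubgroup.map (Dhom d) (AddMonoidHom.ker (β.comp (Dhom d)))) := by
  classical
  have hdpow : ∀ i, (η ^ a i) ^ d i = 1 := fun i => by rw [hd i]; exact pow_orderOf_eq_one _
  set L := AddSubgroup.map (Dhom d) (AddMonoidHom.ker (β.comp (Dhom d))) with hLdef
  have memL : ∀ m : Fin r → ℤ, β m = 0 → (∀ i, (d i : ℤ) ∣ m i) → m ∈ L := by
    intro m h0 hdvd
    refine AddSubgroup.mem_map.mpr ⟨fun i => m i / d i, ?_, ?_⟩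
    · rw [AddMonoidHom.mem_ker, AddMonoidHom.comp_apply,
        show Dhom d (fun i => m i / d i) = m from funext fun i => Int.mul_ediv_cancel' (hdvd i)]
      exact h0
    · exact funext fun i => Int.mul_ediv_cancel' (hdvd i)
  apply le_antisymm
  · -- hard direction: vanishing ideal ⊆ lattice ideal
    rw [_root_.vanishingIdeal, Ideal.span_le]
    rintro f ⟨⟨α, hfh⟩, hfv⟩
    set χ : (Fin r →₀ ℕ) → ((degTorus β η a) →* K) := chiChar β η a with hχ
    have hβ0 : ∀ u ∈ f.support, ∀ v ∈ f.support, β (fun i => (u i : ℤ) - v i) = 0 := by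
      intro u hu v hv
      have h1 := hfh u hu
      have h2 := hfh v hv
      have h3 : β ((fun i => ((u i : ℕ) : ℤ)) - (fun i => ((v i : ℕ) : ℤ))) = 0 := by
        rw [map_sub, show β (fun i => ((u i : ℕ) : ℤ)) = α from h1,
          show β (fun i => ((v i : ℕ) : ℤ)) = α from h2, sub_self]
      exact h3
    have hχmem : ∀ u ∈ f.support, ∀ v ∈ f.support, χ u = χ v →
        (fun i => (u i : ℤ) - v i) ∈ L := by
      intro u hu v hv h
      refine memL _ (hβ0 u hu v hv) fun j => ?_
      set Pj : Fin r → Kˣ := fun i => if i = j then η ^ a j else 1 with hPjdef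
      have hPjM : Pj ∈ degTorus β η a := by
        refine ⟨fun i => if i = j then η else 1, fun i => ?_, ?_⟩
        · by_cases hij : i = j <;> simp [hij, Subgroup.mem_zpowers, one_mem]
        · congr 1
          funext i
          by_cases hij : i = j
          · subst hij; simp [hPjdef]
          · simp [hPjdef, hij, one_zpow]
      have hvalχ : ∀ w : Fin r →₀ ℕ, χ w ⟨Pj, hPjM⟩ = ((η ^ a j : Kˣ) : K) ^ (w j) := by
        intro w
        show (∏ i, ((Pj i : K)) ^ (w i)) = _
        rw [Finset.prod_eq_single j (fun i _ hij => by simp [hPjdef, hij])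
          (fun h => absurd (Finset.mem_univ j) h)]
        simp [hPjdef]
      have hval := congrFun (congrArg (fun φ : (degTorus β η a) →* K => ⇑φ) h) ⟨Pj, hPjM⟩
      simp only [hvalχ] at hval
      have hu' : (η ^ a j) ^ (u j) = (η ^ a j) ^ (v j) :=
        Units.ext (by rw [Units.val_pow_eq_pow_val, Units.val_pow_eq_pow_val]; exact hval)
      have hz : (η ^ a j) ^ ((u j : ℤ) - (v j : ℤ)) = 1 := by
        rw [zpow_sub, zpow_natCast, zpow_natCast, hu']; simp
      show (d j : ℤ) ∣ (u j : ℤ) - (v j : ℤ)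
      rw [hd j]
      exact orderOf_dvd_iff_zpow_eq_one.mpr hz
    have hχeq : ∀ u v : Fin r →₀ ℕ, (fun i => (u i : ℤ) - v i) ∈ L → χ u = χ v := by
      intro u v hL'
      ext P
      have h1 : charEval (P : Fin r → Kˣ) (fun i => (u i : ℤ) - v i) = 1 :=
        charEval_eq_one_of_mem β η a d hdpow P.2 hL'
      rw [hχ, chiChar_apply, chiChar_apply]
      exact congrArg Units.val (by rw [charEval_sub_units _ u v, h1, mul_one])
    have hvanM : ∀ P : degTorus β η a, ∑ u ∈ f.support, coeff u f * χ u P = 0 := by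
      intro P
      have h0 := hfv (P : Fin r → Kˣ) P.2
      rw [eval_eq'] at h0
      exact h0
    set s := f.support.image χ with hs
    set g : ((degTorus β η a) →* K) → K :=
      fun φ => ∑ u ∈ f.support.filter (fun u => χ u = φ), coeff u f with hg
    have hsum0 : ∑ φ ∈ s, g φ • (⇑φ : (degTorus β η a) → K) = 0 := by
      have h1 : ∀ φ ∈ s, g φ • (⇑φ : (degTorus β η a) → K)
          = ∑ u ∈ f.support.filter (fun u => χ u = φ),
              coeff u f • (⇑(χ u) : (degTorus β η a) → K) := by
        intro φ hφ
        rw [hg, Finset.sum_smul]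
        refine Finset.sum_congr rfl fun u hu => ?_
        rw [(Finset.mem_filter.mp hu).2]
      rw [Finset.sum_congr rfl h1,
        Finset.sum_fiberwise_of_maps_to (fun u hu => Finset.mem_image_of_mem χ hu)]
      funext P
      simp only [Finset.sum_apply, Pi.smul_apply, smul_eq_mul, Pi.zero_apply]
      exact hvanM P
    have hg0 : ∀ φ ∈ s, g φ = 0 :=
      linearIndependent_iff'.mp (linearIndependent_monoidHom (degTorus β η a) K) s g hsum0
    set rep : ((degTorus β η a) →* K) → (Fin r →₀ ℕ) := fun φ =>
      if h : (f.support.filter (fun u => χ u = φ)).Nonempty then h.choose else 0 with hrep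
    have hrepmem : ∀ u ∈ f.support, rep (χ u) ∈ f.support ∧ χ (rep (χ u)) = χ u := by
      intro u hu
      have hne : (f.support.filter (fun w => χ w = χ u)).Nonempty :=
        ⟨u, Finset.mem_filter.mpr ⟨hu, rfl⟩⟩
      have hspec := hne.choose_spec
      rw [Finset.mem_filter] at hspec
      rw [hrep]
      simp only [dif_pos hne]
      exact ⟨hspec.1, hspec.2⟩
    have hzero : ∑ u ∈ f.support, monomial (rep (χ u)) (coeff u f) = 0 := by
      rw [← Finset.sum_fiberwise_of_maps_to (fun u hu => Finset.mem_image_of_mem χ hu)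
        (fun u => monomial (rep (χ u)) (coeff u f))]
      refine Finset.sum_eq_zero fun φ hφ => ?_
      have hcong : ∀ u ∈ f.support.filter (fun u => χ u = φ),
          monomial (rep (χ u)) (coeff u f) = monomial (rep φ) (coeff u f) :=
        fun u hu => by rw [(Finset.mem_filter.mp hu).2]
      rw [Finset.sum_congr rfl hcong, ← map_sum (monomial (rep φ)),
        show (∑ u ∈ f.support.filter (fun u => χ u = φ), coeff u f) = g φ from rfl,
        hg0 φ hφ, map_zero]
    have hfeq : f = ∑ u ∈ f.support,
        (monomial u (coeff u f) - monomial (rep (χ u)) (coeff u f)) := by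
      rw [Finset.sum_sub_distrib, hzero, sub_zero]
      exact (support_sum_monomial_coeff f).symm
    rw [hfeq]
    refine Ideal.sum_mem _ fun u hu => ?_
    have hrm := hrepmem u hu
    have hLmem : (fun i => (u i : ℤ) - ((rep (χ u)) i : ℤ)) ∈ L :=
      hχmem u hu _ hrm.1 hrm.2.symm
    rw [show monomial u (coeff u f) - monomial (rep (χ u)) (coeff u f)
        = C (coeff u f) * (monomial u 1 - monomial (rep (χ u)) 1) by
      rw [mul_sub, C_mul_monomial, C_mul_monomial, mul_one]]
    exact Ideal.mul_mem_left _ _ (monomial_sub_mem L u _ hLmem)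
  · -- easy direction: lattice ideal ⊆ vanishing ideal
    rw [latticeIdeal, Ideal.span_le]
    rintro f ⟨m, hm, rfl⟩
    have hβm : β m = 0 := by
      obtain ⟨n, hn, rfl⟩ := hm
      simpa [AddMonoidHom.mem_ker] using hn
    apply Ideal.subset_span
    refine ⟨isHomog_latticeBinomial β hβm, fun P hP => ?_⟩
    have hPM : P ∈ degTorus β η a := hP
    have h1 : charEval P m = 1 := charEval_eq_one_of_mem β η a d hdpow hPM hm
    rw [latticeBinomial, map_sub, eval_monomial_units, eval_monomial_units, sub_eq_zero]
    exact congrArg Units.val (by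
      rw [charEval_sub_units P (expOf m) (expOf (-m)), expOf_sub_expOf_neg, h1, mul_one])
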